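/- Let R be an algebraic curvature tensor on V with Ricci tensor ric := ric_R, and fix x₂,x₄,x₅,x₆ ∈ V. Let T(z₁,z₂,z₃,z₄) := (R_{x₅,z₃}·R)(z₁,z₂,z₄,x₆) and T'(z₁,z₂,z₃,z₄) := (R_{x₅,z₁}·R)(z₃,z₂,z₄,x₆). Then Σᵢ Young(2,2)[T](eᵢ,x₂,eᵢ,x₄) = Σᵢ Young(2,2)[T'](eᵢ,x₂,eᵢ,x₄) = 3·( Σᵢ[(R_{x₅,eᵢ}·R)(eᵢ,x₂,x₄,x₆) + (R_{x₅,eᵢ}·R)(eᵢ,x₄,x₂,x₆)] + (R_{x₅,x₂}·ric)(x₄,x₆) + (R_{x₅,x₄}·ric)(x₂,x₆) ). -/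
import Mathlib


open scoped RealInnerProductSpace

namespace CurvJet

variable {V : Type*} [NormedAddCommGroup V] [InnerProductSpace ℝ V] {n : ℕ}

/-- Quadrilinear forms on `V`, the ambient space of algebraic curvature tensors. -/
abbrev Curv (V : Type*) [NormedAddCommGroup V] [InnerProductSpace ℝ V] : Type _ :=
  V →ₗ[ℝ] V →ₗ[ℝ] V →ₗ[ℝ] V →ₗ[ℝ] ℝ

/-- The underlying 4-argument function of a quadrilinear form. -/
def toFun4 (R : Curv V) : V → V → V → V → ℝ := fun z₁ z₂ z₃ z₄ => R z₁ z₂ z₃ z₄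

/-- `R` is an algebraic curvature tensor: antisymmetry in the first pair, pair symmetry,
and the first Bianchi identity. -/
def IsCurv (R : Curv V) : Prop :=
  (∀ x y z w, R x y z w = - R y x z w) ∧
  (∀ x y z w, R x y z w = R z w x y) ∧
  (∀ x y z w, R x y z w + R y z x w + R z x y w = 0)

/-- The Ricci tensor `ric_R(x,y) = -∑ᵢ R(x,eᵢ,y,eᵢ)`. -/
noncomputable def ric (e : OrthonormalBasis (Fin n) ℝ V) (R : Curv V) (x y : V) : ℝ :=
  - ∑ i, R x (e i) y (e i)

/-- The curvature endomorphism `R_{x,y}`, characterized by `⟪R_{x,y}z, w⟫ = R(x,y,z,w)`. -/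
noncomputable def curvEnd (e : OrthonormalBasis (Fin n) ℝ V) (R : Curv V) (x y z : V) : V :=
  ∑ i, R x y z (e i) • e i

/-- Action of an endomorphism `B` on a covariant 4-tensor by algebraic derivation. -/
def act4 (B : V → V) (A : V → V → V → V → ℝ) (x₁ x₂ x₃ x₄ : V) : ℝ :=
  -(A (B x₁) x₂ x₃ x₄ + A x₁ (B x₂) x₃ x₄ + A x₁ x₂ (B x₃) x₄ + A x₁ x₂ x₃ (B x₄))

/-- Action of an endomorphism `B` on a covariant 2-tensor by algebraic derivation. -/
def act2 (B : V → V) (A : V → V → ℝ) (x y : V) : ℝ :=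
  -(A (B x) y + A x (B y))

/-- `R*A` for a covariant 4-tensor `A`. -/
noncomputable def star4 (e : OrthonormalBasis (Fin n) ℝ V) (R : Curv V)
    (A : V → V → V → V → ℝ) (x₁ x₂ x₃ x₄ : V) : ℝ :=
  -((∑ j, act4 (curvEnd e R x₁ (e j)) A (e j) x₂ x₃ x₄)
    + (∑ j, act4 (curvEnd e R x₂ (e j)) A x₁ (e j) x₃ x₄)
    + (∑ j, act4 (curvEnd e R x₃ (e j)) A x₁ x₂ (e j) x₄)
    + (∑ j, act4 (curvEnd e R x₄ (e j)) A x₁ x₂ x₃ (e j)))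

/-- `R*A` for a covariant 2-tensor `A`. -/
noncomputable def star2 (e : OrthonormalBasis (Fin n) ℝ V) (R : Curv V)
    (A : V → V → ℝ) (x y : V) : ℝ :=
  -((∑ j, act2 (curvEnd e R x (e j)) A (e j) y)
    + (∑ j, act2 (curvEnd e R y (e j)) A x (e j)))

/-- The algebraic curvature tensor `R*R`. -/
noncomputable def RstarR (e : OrthonormalBasis (Fin n) ℝ V) (R : Curv V) :
    V → V → V → V → ℝ :=
  star4 e R (toFun4 R)

/-- Row symmetrization of the Young tableau with rows `{1,3}`, `{2,4}` on a 4-tensor. -/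
def rowSym22 (T : V → V → V → V → ℝ) (x₁ x₂ x₃ x₄ : V) : ℝ :=
  T x₁ x₂ x₃ x₄ + T x₃ x₂ x₁ x₄ + T x₁ x₄ x₃ x₂ + T x₃ x₄ x₁ x₂

/-- The Young symmetrizer of the tableau with rows `{1,3}`, `{2,4}` and columns
`{1,2}`, `{3,4}`, acting on 4-tensors. -/
def young22 (T : V → V → V → V → ℝ) (x₁ x₂ x₃ x₄ : V) : ℝ :=
  rowSym22 T x₁ x₂ x₃ x₄ - rowSym22 T x₂ x₁ x₃ x₄
    - rowSym22 T x₁ x₂ x₄ x₃ + rowSym22 T x₂ x₁ x₄ x₃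

/-- Row symmetrization of the Young tableau with rows `{1,3,5,6}`, `{2,4}` on a 6-tensor. -/
noncomputable def rowSym42 (T : V → V → V → V → V → V → ℝ) (x₁ x₂ x₃ x₄ x₅ x₆ : V) : ℝ :=
  ∑ σ : Equiv.Perm (Fin 4),
    (T (![x₁, x₃, x₅, x₆] (σ 0)) x₂ (![x₁, x₃, x₅, x₆] (σ 1)) x₄
        (![x₁, x₃, x₅, x₆] (σ 2)) (![x₁, x₃, x₅, x₆] (σ 3))
     + T (![x₁, x₃, x₅, x₆] (σ 0)) x₄ (![x₁, x₃, x₅, x₆] (σ 1)) x₂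
        (![x₁, x₃, x₅, x₆] (σ 2)) (![x₁, x₃, x₅, x₆] (σ 3)))

/-- The Young symmetrizer of the tableau on six slots with rows `{1,3,5,6}`, `{2,4}` and
columns `{1,2}`, `{3,4}`. -/
noncomputable def young42 (T : V → V → V → V → V → V → ℝ) (x₁ x₂ x₃ x₄ x₅ x₆ : V) : ℝ :=
  rowSym42 T x₁ x₂ x₃ x₄ x₅ x₆ - rowSym42 T x₂ x₁ x₃ x₄ x₅ x₆
    - rowSym42 T x₁ x₂ x₄ x₃ x₅ x₆ + rowSym42 T x₂ x₁ x₄ x₃ x₅ x₆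

/-- Row symmetrization of the Young tableau with rows `{1,3,5}`, `{2,4}` on a 5-tensor
(the fifth function argument is the slot lying in the first row). -/
noncomputable def rowSym5 (T : V → V → V → V → V → ℝ) (z₁ z₂ z₃ z₄ z₅ : V) : ℝ :=
  ∑ σ : Equiv.Perm (Fin 3),
    (T (![z₁, z₃, z₅] (σ 0)) z₂ (![z₁, z₃, z₅] (σ 1)) z₄ (![z₁, z₃, z₅] (σ 2))
     + T (![z₁, z₃, z₅] (σ 0)) z₄ (![z₁, z₃, z₅] (σ 1)) z₂ (![z₁, z₃, z₅] (σ 2)))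

/-- The Young symmetrizer of the tableau on five slots with rows `{1,3,5}`, `{2,4}` and
columns `{1,2}`, `{3,4}` (the fifth function argument is the slot in the first row). -/
noncomputable def young5 (T : V → V → V → V → V → ℝ) (z₁ z₂ z₃ z₄ z₅ : V) : ℝ :=
  rowSym5 T z₁ z₂ z₃ z₄ z₅ - rowSym5 T z₂ z₁ z₃ z₄ z₅
    - rowSym5 T z₁ z₂ z₄ z₃ z₅ + rowSym5 T z₂ z₁ z₄ z₃ z₅

/-- First-order jet conditions: each `∇ₓR` is a curvature tensor and the second Bianchi
identity holds. -/
def IsJet1 (D1 : V →ₗ[ℝ] Curv V) : Prop :=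
  (∀ x, IsCurv (D1 x)) ∧
  (∀ x y z u v, D1 x y z u v + D1 y z x u v + D1 z x y u v = 0)

/-- Second-order jet conditions: each `∇²_{x,y}R` is a curvature tensor, the second Bianchi
identity holds, and the Ricci identity `∇²_{x,y}R − ∇²_{y,x}R = R_{x,y}·R` holds. -/
def IsJet2 (e : OrthonormalBasis (Fin n) ℝ V) (R : Curv V)
    (D2 : V →ₗ[ℝ] V →ₗ[ℝ] Curv V) : Prop :=
  (∀ x y, IsCurv (D2 x y)) ∧
  (∀ x y z w u v, D2 x y z w u v + D2 x z w y u v + D2 x w y z u v = 0) ∧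
  (∀ x y z₁ z₂ z₃ z₄, D2 x y z₁ z₂ z₃ z₄ - D2 y x z₁ z₂ z₃ z₄ =
    act4 (curvEnd e R x y) (toFun4 R) z₁ z₂ z₃ z₄)

/-- Algebraic two-jet `(R, ∇R, ∇²R)`. -/
def IsTwoJet (e : OrthonormalBasis (Fin n) ℝ V) (R : Curv V)
    (D1 : V →ₗ[ℝ] Curv V) (D2 : V →ₗ[ℝ] V →ₗ[ℝ] Curv V) : Prop :=
  IsCurv R ∧ IsJet1 D1 ∧ IsJet2 e R D2

/-- `∇ₓric(y,z) = -∑ᵢ ∇ₓR(y,eᵢ,z,eᵢ)`. -/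
noncomputable def nablaRic (e : OrthonormalBasis (Fin n) ℝ V)
    (D1 : V →ₗ[ℝ] Curv V) (x y z : V) : ℝ :=
  - ∑ i, D1 x y (e i) z (e i)

/-- `∇²_{x,y}ric(z,w) = -∑ᵢ ∇²_{x,y}R(z,eᵢ,w,eᵢ)`. -/
noncomputable def nabla2Ric (e : OrthonormalBasis (Fin n) ℝ V)
    (D2 : V →ₗ[ℝ] V →ₗ[ℝ] Curv V) (x y z w : V) : ℝ :=
  - ∑ i, D2 x y z (e i) w (e i)

/-- The rough Laplacian `∇*∇R(z₁,z₂,z₃,z₄) = -∑ᵢ ∇²_{eᵢ,eᵢ}R(z₁,z₂,z₃,z₄)`. -/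
noncomputable def roughLap (e : OrthonormalBasis (Fin n) ℝ V)
    (D2 : V →ₗ[ℝ] V →ₗ[ℝ] Curv V) (z₁ z₂ z₃ z₄ : V) : ℝ :=
  - ∑ i, D2 (e i) (e i) z₁ z₂ z₃ z₄

/-- `∇ₓδ_yR(z,w) = -∑ᵢ ∇²_{x,eᵢ}R(eᵢ,y,z,w)`. -/
noncomputable def nablaDelta (e : OrthonormalBasis (Fin n) ℝ V)
    (D2 : V →ₗ[ℝ] V →ₗ[ℝ] Curv V) (x y z w : V) : ℝ :=
  - ∑ i, D2 x (e i) (e i) y z w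

/-- The two-jet is Einstein: `ric = c⟪·,·⟫`, `∇ric = 0` and `∇²ric = 0`. -/
def IsEinsteinJet (e : OrthonormalBasis (Fin n) ℝ V) (R : Curv V)
    (D1 : V →ₗ[ℝ] Curv V) (D2 : V →ₗ[ℝ] V →ₗ[ℝ] Curv V) : Prop :=
  (∃ c : ℝ, ∀ x y, ric e R x y = c * ⟪x, y⟫) ∧
  (∀ x y z, nablaRic e D1 x y z = 0) ∧
  (∀ x y z w, nabla2Ric e D2 x y z w = 0)



section Aux9

variable {V : Type*} [NormedAddCommGroup V] [InnerProductSpace ℝ V] {n : ℕ}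

lemma act4_a1 {R : Curv V} (h1 : ∀ x y z w, R x y z w = - R y x z w)
    (B : V → V) (a b c d : V) :
    act4 B (toFun4 R) a b c d = - act4 B (toFun4 R) b a c d := by
  simp only [act4, toFun4]
  linarith [h1 (B a) b c d, h1 a (B b) c d, h1 a b (B c) d, h1 a b c (B d)]

lemma act4_pair {R : Curv V} (h2 : ∀ x y z w, R x y z w = R z w x y)
    (B : V → V) (a b c d : V) :
    act4 B (toFun4 R) a b c d = act4 B (toFun4 R) c d a b := by
  simp only [act4, toFun4]
  linarith [h2 (B a) b c d, h2 a (B b) c d, h2 a b (B c) d, h2 a b c (B d)]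

lemma act4_bianchi {R : Curv V} (h3 : ∀ x y z w, R x y z w + R y z x w + R z x y w = 0)
    (B : V → V) (a b c d : V) :
    act4 B (toFun4 R) a b c d + act4 B (toFun4 R) b c a d + act4 B (toFun4 R) c a b d = 0 := by
  simp only [act4, toFun4]
  linarith [h3 (B a) b c d, h3 a (B b) c d, h3 a b (B c) d, h3 a b c (B d),
    h3 b (B c) a d, h3 b c (B a) d, h3 (B b) c a d, h3 b c a (B d),
    h3 (B c) a b d, h3 c (B a) b d, h3 c a (B b) d, h3 c a b (B d)]

lemma act4_a2 {R : Curv V} (hR : IsCurv R) (B : V → V) (a b c d : V) :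
    act4 B (toFun4 R) a b c d = - act4 B (toFun4 R) a b d c := by
  linarith [act4_pair hR.2.1 B a b c d, act4_a1 hR.1 B c d a b, act4_pair hR.2.1 B d c a b]

lemma skew_cancel (e : OrthonormalBasis (Fin n) ℝ V) {R : Curv V} (hR : IsCurv R)
    (x₅ u y w : V) :
    ∑ i, (R y (curvEnd e R x₅ u (e i)) w (e i) + R y (e i) w (curvEnd e R x₅ u (e i))) = 0 := by
  have h4 : ∀ a b c d, R a b c d = - R a b d c := fun a b c d => by
    linarith [hR.2.1 a b c d, hR.1 c d a b, hR.2.1 d c a b]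
  have expand2 : ∀ i, R y (curvEnd e R x₅ u (e i)) w (e i)
      = ∑ j, R x₅ u (e i) (e j) * R y (e j) w (e i) := by
    intro i
    simp [curvEnd, map_sum, map_smul, LinearMap.sum_apply, LinearMap.smul_apply, smul_eq_mul]
  have expand4 : ∀ i, R y (e i) w (curvEnd e R x₅ u (e i))
      = ∑ j, R x₅ u (e i) (e j) * R y (e i) w (e j) := by
    intro i
    simp [curvEnd, map_sum, map_smul, LinearMap.sum_apply, LinearMap.smul_apply, smul_eq_mul]
  have hcomm : (∑ i, ∑ j, R x₅ u (e i) (e j) * R y (e i) w (e j))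
      = ∑ i, ∑ j, R x₅ u (e j) (e i) * R y (e j) w (e i) := Finset.sum_comm
  calc ∑ i, (R y (curvEnd e R x₅ u (e i)) w (e i) + R y (e i) w (curvEnd e R x₅ u (e i)))
      = (∑ i, ∑ j, R x₅ u (e i) (e j) * R y (e j) w (e i))
        + ∑ i, ∑ j, R x₅ u (e i) (e j) * R y (e i) w (e j) := by
        rw [← Finset.sum_add_distrib]
        exact Finset.sum_congr rfl fun i _ => by rw [expand2 i, expand4 i]
    _ = (∑ i, ∑ j, R x₅ u (e i) (e j) * R y (e j) w (e i))
        + ∑ i, ∑ j, R x₅ u (e j) (e i) * R y (e j) w (e i) := by rw [hcomm]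
    _ = 0 := by
        rw [← Finset.sum_add_distrib]
        refine Finset.sum_eq_zero fun i _ => ?_
        rw [← Finset.sum_add_distrib]
        refine Finset.sum_eq_zero fun j _ => ?_
        linear_combination R y (e j) w (e i) * h4 x₅ u (e i) (e j)

lemma trace_lemma (e : OrthonormalBasis (Fin n) ℝ V) {R : Curv V} (hR : IsCurv R)
    (x₅ u y w : V) :
    ∑ i, act4 (curvEnd e R x₅ u) (toFun4 R) y (e i) w (e i)
      = - act2 (curvEnd e R x₅ u) (ric e R) y w := by
  have hs := skew_cancel e hR x₅ u y w
  rw [Finset.sum_add_distrib] at hs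
  simp only [act4, act2, ric, toFun4]
  simp only [neg_add_rev, neg_neg, Finset.sum_neg_distrib, Finset.sum_add_distrib]
  linarith [hs]

lemma young_key (e : OrthonormalBasis (Fin n) ℝ V) {R : Curv V} (hR : IsCurv R)
    (x₂ x₄ x₅ x₆ u : V) :
    young22 (fun z₁ z₂ z₃ z₄ => act4 (curvEnd e R x₅ z₃) (toFun4 R) z₁ z₂ z₄ x₆) u x₂ u x₄
      = 3 * (act4 (curvEnd e R x₅ u) (toFun4 R) u x₂ x₄ x₆
           + act4 (curvEnd e R x₅ u) (toFun4 R) u x₄ x₂ x₆)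
        - 3 * act4 (curvEnd e R x₅ x₂) (toFun4 R) x₄ u x₆ u
        - 3 * act4 (curvEnd e R x₅ x₄) (toFun4 R) x₂ u x₆ u := by
  obtain ⟨h1, h2, h3⟩ := hR
  simp only [young22, rowSym22]
  linarith [act4_a1 h1 (curvEnd e R x₅ u) x₂ u x₄ x₆,
    act4_a1 h1 (curvEnd e R x₅ u) x₄ u x₂ x₆,
    act4_bianchi h3 (curvEnd e R x₅ u) x₂ x₄ u x₆,
    act4_bianchi h3 (curvEnd e R x₅ u) x₄ x₂ u x₆,
    act4_a1 h1 (curvEnd e R x₅ x₂) u u x₄ x₆,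
    act4_a1 h1 (curvEnd e R x₅ x₄) u u x₂ x₆,
    act4_bianchi h3 (curvEnd e R x₅ x₂) x₄ u u x₆,
    act4_bianchi h3 (curvEnd e R x₅ x₄) x₂ u u x₆,
    act4_a1 h1 (curvEnd e R x₅ x₂) u x₄ u x₆,
    act4_a1 h1 (curvEnd e R x₅ x₄) u x₂ u x₆,
    act4_a2 ⟨h1, h2, h3⟩ (curvEnd e R x₅ x₂) x₄ u u x₆,
    act4_a2 ⟨h1, h2, h3⟩ (curvEnd e R x₅ x₄) x₂ u u x₆]

lemma young_eq (x₅ x₆ : V) (R : Curv V)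
    (e : OrthonormalBasis (Fin n) ℝ V) (z₁ z₂ z₃ z₄ : V) :
    young22 (fun a b c d => act4 (curvEnd e R x₅ c) (toFun4 R) a b d x₆) z₁ z₂ z₃ z₄
      = young22 (fun a b c d => act4 (curvEnd e R x₅ a) (toFun4 R) c b d x₆) z₁ z₂ z₃ z₄ := by
  simp only [young22, rowSym22]
  ring

end Aux9

/-- Lemma on traces of Young(2,2)-symmetrized tensors built from
`R_{x₅,·}·R`. -/
theorem young22_trace_curv_action
    {V : Type*} [NormedAddCommGroup V] [InnerProductSpace ℝ V] {n : ℕ}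
    (e : OrthonormalBasis (Fin n) ℝ V)
    (R : Curv V) (hR : IsCurv R) (x₂ x₄ x₅ x₆ : V) :
    (∑ i, young22 (fun z₁ z₂ z₃ z₄ => act4 (curvEnd e R x₅ z₃) (toFun4 R) z₁ z₂ z₄ x₆)
        (e i) x₂ (e i) x₄ =
      ∑ i, young22 (fun z₁ z₂ z₃ z₄ => act4 (curvEnd e R x₅ z₁) (toFun4 R) z₃ z₂ z₄ x₆)
        (e i) x₂ (e i) x₄) ∧
    (∑ i, young22 (fun z₁ z₂ z₃ z₄ => act4 (curvEnd e R x₅ z₃) (toFun4 R) z₁ z₂ z₄ x₆)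
        (e i) x₂ (e i) x₄ =
      3 * ((∑ i, (act4 (curvEnd e R x₅ (e i)) (toFun4 R) (e i) x₂ x₄ x₆
                  + act4 (curvEnd e R x₅ (e i)) (toFun4 R) (e i) x₄ x₂ x₆))
           + act2 (curvEnd e R x₅ x₂) (ric e R) x₄ x₆
           + act2 (curvEnd e R x₅ x₄) (ric e R) x₂ x₆)) := by
  constructor
  · exact Finset.sum_congr rfl fun i _ => young_eq x₅ x₆ R e (e i) x₂ (e i) x₄
  · calc ∑ i, young22 (fun z₁ z₂ z₃ z₄ => act4 (curvEnd e R x₅ z₃) (toFun4 R) z₁ z₂ z₄ x₆)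
          (e i) x₂ (e i) x₄
        = ∑ i, (3 * (act4 (curvEnd e R x₅ (e i)) (toFun4 R) (e i) x₂ x₄ x₆
              + act4 (curvEnd e R x₅ (e i)) (toFun4 R) (e i) x₄ x₂ x₆)
            - 3 * act4 (curvEnd e R x₅ x₂) (toFun4 R) x₄ (e i) x₆ (e i)
            - 3 * act4 (curvEnd e R x₅ x₄) (toFun4 R) x₂ (e i) x₆ (e i)) :=
          Finset.sum_congr rfl fun i _ => young_key e hR x₂ x₄ x₅ x₆ (e i)
      _ = 3 * ((∑ i, (act4 (curvEnd e R x₅ (e i)) (toFun4 R) (e i) x₂ x₄ x₆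
                  + act4 (curvEnd e R x₅ (e i)) (toFun4 R) (e i) x₄ x₂ x₆))
           + act2 (curvEnd e R x₅ x₂) (ric e R) x₄ x₆
           + act2 (curvEnd e R x₅ x₄) (ric e R) x₂ x₆) := by
          simp only [Finset.sum_sub_distrib, ← Finset.mul_sum]
          rw [trace_lemma e hR x₅ x₂ x₄ x₆, trace_lemma e hR x₅ x₄ x₂ x₆]
          ring


end CurvJet
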